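/- Let f, g : ℕ → ℕ be polynomial functions with coefficients in ℕ ∪ {0} (mapping positive naturals to positive naturals), each of which is continuous as a map from the Macías space M(ℕ) to itself. Then the pointwise product h(x) := f(x)·g(x) is continuous as a map from M(ℕ) to itself. -/

import Mathlib

open Topology

/-- For `n` a positive natural, `σ_n = {m ∈ ℕ⁺ : gcd(n,m) = 1}`. -/
def sigmaSet (n : ℕ+) : Set ℕ+ := {m : ℕ+ | Nat.Coprime (n : ℕ) (m : ℕ)}

/-- The Macías topology `τ_M` on the positive naturals, generated by the sets `σ_n`. -/
def tauM : TopologicalSpace ℕ+ :=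
  TopologicalSpace.generateFrom (Set.range sigmaSet)

/-- `f : ℕ⁺ → ℕ⁺` is a polynomial function with coefficients in `ℕ ∪ {0}`. -/
def IsPolyFun (f : ℕ+ → ℕ+) : Prop :=
  ∃ (n : ℕ) (a : ℕ → ℕ),
    ∀ x : ℕ+, (f x : ℕ) = ∑ k ∈ Finset.range (n + 1), a k * (x : ℕ) ^ k

theorem mul_poly_continuous (f g : ℕ+ → ℕ+) (hf : IsPolyFun f) (hg : IsPolyFun g)
    (hfc : Continuous[tauM, tauM] f) (hgc : Continuous[tauM, tauM] g) :
    Continuous[tauM, tauM] (fun x : ℕ+ => f x * g x) := by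
  rw [tauM, continuous_generateFrom_iff]
  rintro s ⟨n, rfl⟩
  have key : (fun x : ℕ+ => f x * g x) ⁻¹' sigmaSet n
      = f ⁻¹' sigmaSet n ∩ g ⁻¹' sigmaSet n := by
    ext x
    simp only [Set.mem_preimage, sigmaSet, Set.mem_setOf_eq, Set.mem_inter_iff,
      PNat.mul_coe, Nat.Coprime, Nat.coprime_mul_iff_right]
  rw [key]
  have hopen : IsOpen[tauM] (sigmaSet n) :=
    TopologicalSpace.isOpen_generateFrom_of_mem ⟨n, rfl⟩
  exact @IsOpen.inter ℕ+ tauM _ _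
    (@Continuous.isOpen_preimage ℕ+ ℕ+ tauM tauM f hfc _ hopen)
    (@Continuous.isOpen_preimage ℕ+ ℕ+ tauM tauM g hgc _ hopen)
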